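/- Let r₀ > 0, δ ≥ 0, let h : [0,∞) → ℝ be a backward profile function with area radius r₀ and Hawking mass bound δ, and let 0 < D ≤ r₀. Then ∫₀^D ( h(σ)² − (r₀−σ)² )² · 4π·(r₀−σ)² dσ + ∫₀^D ( 2·h(σ)·h'(σ) + 2·(r₀−σ) )² · 4π·(r₀−σ)² dσ ≤ (1 + r₀²)·( 16·√π · r₀² · δ^{1/3} · D^{1/6} )². -/

import Mathlib

open Real intervalIntegral

/-- A *backward profile function* with area radius `r₀` and Hawking mass
bound `δ`: a differentiable function `h : [0,∞) → ℝ` with `h(0) = r₀`,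
`−1 ≤ h'(σ) ≤ 0` and `h(σ)·(1 − h'(σ)²) ≤ 2δ` for all `σ ≥ 0`. -/
def IsBackwardProfile (r₀ δ : ℝ) (h : ℝ → ℝ) : Prop :=
  h 0 = r₀
  ∧ (∀ σ ≥ (0:ℝ), DifferentiableAt ℝ h σ)
  ∧ (∀ σ ≥ (0:ℝ), -1 ≤ deriv h σ ∧ deriv h σ ≤ 0)
  ∧ (∀ σ ≥ (0:ℝ), h σ * (1 - (deriv h σ) ^ 2) ≤ 2 * δ)

set_option maxHeartbeats 1000000 in
/-- **Sobolev stability of thin inner tubular regions.**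
If `h` is a backward profile function with area radius `r₀ > 0` and Hawking
mass bound `δ ≥ 0`, and `0 < D ≤ r₀`, then the squared weighted `H¹` norm of
`h² − (r₀−σ)²` on `[0,D]` is at most `(1 + r₀²)·(16√π·r₀²·δ^(1/3)·D^(1/6))²`. -/
theorem sobolev_stability_thin_regions
    (r₀ δ D : ℝ) (hr : 0 < r₀) (hδ : 0 ≤ δ)
    (h : ℝ → ℝ) (hprof : IsBackwardProfile r₀ δ h)
    (hD : 0 < D) (hDr : D ≤ r₀) :
    (∫ σ in (0:ℝ)..D, ((h σ) ^ 2 - (r₀ - σ) ^ 2) ^ 2 * (4 * π * (r₀ - σ) ^ 2))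
      + (∫ σ in (0:ℝ)..D,
          (2 * h σ * deriv h σ + 2 * (r₀ - σ)) ^ 2 * (4 * π * (r₀ - σ) ^ 2))
    ≤ (1 + r₀ ^ 2) *
        (16 * Real.sqrt π * r₀ ^ 2 * δ ^ ((1:ℝ)/3) * D ^ ((1:ℝ)/6)) ^ 2 := by
  obtain ⟨h0, hdiff, hd, hmass⟩ := hprof
  have hcont : ContinuousOn h (Set.Ici 0) :=
    fun x hx => ((hdiff x hx).continuousAt).continuousWithinAt
  have hderivA : ∀ x : ℝ, 0 < x → HasDerivAt (fun s => h s + s) (deriv h x + 1) x :=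
    fun x hx => ((hdiff x hx.le).hasDerivAt).add (hasDerivAt_id x)
  -- h + id is monotone on [0,∞)
  have hmono : MonotoneOn (fun s => h s + s) (Set.Ici 0) := by
    apply monotoneOn_of_deriv_nonneg (convex_Ici 0)
    · exact hcont.add continuous_id.continuousOn
    · intro x hx
      rw [interior_Ici] at hx
      exact (hderivA x hx).differentiableAt.differentiableWithinAt
    · intro x hx
      rw [interior_Ici] at hx
      rw [(hderivA x hx).deriv]
      linarith [(hd x (le_of_lt hx)).1]
  have hanti : AntitoneOn h (Set.Ici 0) := by
    apply antitoneOn_of_deriv_nonpos (convex_Ici 0) hcont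
    · intro x hx; rw [interior_Ici] at hx
      exact (hdiff x hx.le).differentiableWithinAt
    · intro x hx; rw [interior_Ici] at hx
      exact (hd x hx.le).2
  have hub : ∀ x : ℝ, 0 ≤ x → h x ≤ r₀ := by
    intro x hx
    have := hanti (Set.mem_Ici.mpr le_rfl) (Set.mem_Ici.mpr hx) hx
    linarith [this, h0.ge, h0.le]
  have hlb : ∀ x : ℝ, 0 ≤ x → r₀ - x ≤ h x := by
    intro x hx
    have := hmono (Set.mem_Ici.mpr le_rfl) (Set.mem_Ici.mpr hx) hx
    simp only [add_zero] at this
    linarith [this, h0.ge]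
  -- key pointwise inequality
  have K : ∀ s : ℝ, 0 ≤ s → s ≤ r₀ → (1 + deriv h s) * (r₀ - s) ≤ 2 * δ := by
    intro s hs hsr
    have h1 : 0 ≤ 1 + deriv h s := by linarith [(hd s hs).1]
    have h1' : deriv h s ≤ 0 := (hd s hs).2
    have h2 : r₀ - s ≤ h s := hlb s hs
    have h3 : (0:ℝ) ≤ h s := le_trans (by linarith) h2
    have := hmass s hs
    have e1 : (1 + deriv h s) * (r₀ - s) ≤ (1 + deriv h s) * h s :=
      mul_le_mul_of_nonneg_left h2 h1
    have e2 : 0 ≤ (1 + deriv h s) * h s * (-(deriv h s)) :=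
      mul_nonneg (mul_nonneg h1 h3) (by linarith)
    nlinarith [e1, e2]
  have K2 : ∀ s : ℝ, 0 ≤ s → s ≤ r₀ → h s * (1 + deriv h s) ≤ 2 * δ := by
    intro s hs hsr
    have h1 : 0 ≤ 1 + deriv h s := by linarith [(hd s hs).1]
    have h1' : deriv h s ≤ 0 := (hd s hs).2
    have h2 : r₀ - s ≤ h s := hlb s hs
    have h3 : (0:ℝ) ≤ h s := le_trans (by linarith) h2
    have := hmass s hs
    have e2 : 0 ≤ h s * (1 + deriv h s) * (-(deriv h s)) :=
      mul_nonneg (mul_nonneg h3 h1) (by linarith)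
    nlinarith [e2]
  -- linear comparison bound
  have hc : ∀ σ : ℝ, 0 ≤ σ → σ ≤ r₀ → (h σ - (r₀ - σ)) * (r₀ - σ) ≤ 2 * δ * σ := by
    intro σ hσ hσr
    rcases eq_or_lt_of_le hσr with heq | hlt
    · subst heq; simp; positivity
    · have hpos : 0 < r₀ - σ := by linarith
      set c := 2 * δ / (r₀ - σ) with hc_def
      have gmono : MonotoneOn (fun s => c * s - (h s + s)) (Set.Icc 0 σ) := by
        apply monotoneOn_of_deriv_nonneg (convex_Icc 0 σ)
        · exact (continuous_const.mul continuous_id).continuousOn.sub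
            ((hcont.mono (fun x hx => hx.1)).add continuous_id.continuousOn)
        · intro x hx
          rw [interior_Icc] at hx
          have hg : HasDerivAt (fun s => c * s - (h s + s)) (c * 1 - (deriv h x + 1)) x :=
            ((hasDerivAt_id x).const_mul c).sub (hderivA x hx.1)
          exact hg.differentiableAt.differentiableWithinAt
        · intro x hx
          rw [interior_Icc] at hx
          have hg : HasDerivAt (fun s => c * s - (h s + s)) (c * 1 - (deriv h x + 1)) x :=
            ((hasDerivAt_id x).const_mul c).sub (hderivA x hx.1)
          rw [hg.deriv]
          have hx0 : (0:ℝ) < x := hx.1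
          have kx : (1 + deriv h x) * (r₀ - x) ≤ 2 * δ := K x hx0.le (by linarith [hx.2])
          have h1 : 0 ≤ 1 + deriv h x := by linarith [(hd x hx0.le).1]
          have kσ : (1 + deriv h x) * (r₀ - σ) ≤ 2 * δ := by
            nlinarith [mul_nonneg h1 (by linarith [hx.2] : (0:ℝ) ≤ σ - x)]
          have hle : 1 + deriv h x ≤ c := by
            rw [hc_def, le_div_iff₀ hpos]; linarith
          simp only [mul_one]
          linarith
      have hg : c * 0 - (h 0 + 0) ≤ c * σ - (h σ + σ) :=
        gmono (Set.left_mem_Icc.mpr hσ) (Set.right_mem_Icc.mpr hσ) hσ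
      rw [h0] at hg
      have hA : h σ - (r₀ - σ) ≤ c * σ := by linarith
      have hA0 : 0 ≤ h σ - (r₀ - σ) := by linarith [hlb σ hσ]
      have := mul_le_mul_of_nonneg_right hA hpos.le
      have hcσ : c * σ * (r₀ - σ) = 2 * δ * σ := by
        rw [hc_def]
        field_simp
      linarith [this, hcσ.le, hcσ.ge]
  set m := min (2 * δ) r₀ with hm_def
  have hm0 : 0 ≤ m := le_min (by linarith) hr.le
  have hmδ : m ≤ 2 * δ := min_le_left _ _
  have hmr : m ≤ r₀ := min_le_right _ _
  -- refined bounds with m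
  have hd2 : ∀ σ : ℝ, 0 ≤ σ → σ ≤ r₀ → h σ * (1 + deriv h σ) ≤ m := by
    intro σ hσ hσr
    refine le_min (K2 σ hσ hσr) ?_
    have h1' : deriv h σ ≤ 0 := (hd σ hσ).2
    have h1 : 0 ≤ 1 + deriv h σ := by linarith [(hd σ hσ).1]
    have h3 : (0:ℝ) ≤ h σ := le_trans (by linarith) (hlb σ hσ)
    nlinarith [hub σ hσ]
  have hA2 : ∀ σ : ℝ, 0 ≤ σ → σ ≤ r₀ → (h σ - (r₀ - σ)) * (r₀ - σ) ≤ σ * m := by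
    intro σ hσ hσr
    rcases le_total (2 * δ) r₀ with hm' | hm'
    · rw [hm_def, min_eq_left hm']
      calc (h σ - (r₀ - σ)) * (r₀ - σ) ≤ 2 * δ * σ := hc σ hσ hσr
        _ = σ * (2 * δ) := by ring
    · rw [hm_def, min_eq_right hm']
      have hA0 : 0 ≤ h σ - (r₀ - σ) := by linarith [hlb σ hσ]
      have hAσ : h σ - (r₀ - σ) ≤ σ := by linarith [hub σ hσ]
      nlinarith
  -- pointwise bounds on the integrands on [0, D]
  have B1 : ∀ σ ∈ Set.Icc (0:ℝ) D,
      ((h σ) ^ 2 - (r₀ - σ) ^ 2) ^ 2 * (4 * π * (r₀ - σ) ^ 2) ≤ 16 * π * r₀ ^ 4 * m ^ 2 := by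
    intro σ hσ
    obtain ⟨hσ0, hσD⟩ := hσ
    have hσr : σ ≤ r₀ := le_trans hσD hDr
    have hu0 : 0 ≤ r₀ - σ := by linarith
    have hA0 : 0 ≤ h σ - (r₀ - σ) := by linarith [hlb σ hσ0]
    have hhr : h σ ≤ r₀ := hub σ hσ0
    have hAu : (h σ - (r₀ - σ)) * (r₀ - σ) ≤ σ * m := hA2 σ hσ0 hσr
    have hX0 : 0 ≤ ((h σ) ^ 2 - (r₀ - σ) ^ 2) * (r₀ - σ) := by
      nlinarith [mul_nonneg (mul_nonneg hA0 (by linarith : (0:ℝ) ≤ h σ + (r₀ - σ))) hu0]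
    have hX : ((h σ) ^ 2 - (r₀ - σ) ^ 2) * (r₀ - σ) ≤ 2 * r₀ ^ 2 * m := by
      have e1 : ((h σ) ^ 2 - (r₀ - σ) ^ 2) * (r₀ - σ)
          = (h σ + (r₀ - σ)) * ((h σ - (r₀ - σ)) * (r₀ - σ)) := by ring
      rw [e1]
      have h2 : h σ + (r₀ - σ) ≤ 2 * r₀ := by linarith
      have h3 : 0 ≤ (h σ - (r₀ - σ)) * (r₀ - σ) := mul_nonneg hA0 hu0
      calc (h σ + (r₀ - σ)) * ((h σ - (r₀ - σ)) * (r₀ - σ))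
          ≤ (2 * r₀) * (σ * m) := mul_le_mul h2 hAu h3 (by linarith)
        _ ≤ (2 * r₀) * (r₀ * m) := by nlinarith
        _ = 2 * r₀ ^ 2 * m := by ring
    have hX2 : (((h σ) ^ 2 - (r₀ - σ) ^ 2) * (r₀ - σ)) ^ 2 ≤ (2 * r₀ ^ 2 * m) ^ 2 :=
      pow_le_pow_left₀ hX0 hX 2
    have e2 : ((h σ) ^ 2 - (r₀ - σ) ^ 2) ^ 2 * (4 * π * (r₀ - σ) ^ 2)
        = 4 * π * (((h σ) ^ 2 - (r₀ - σ) ^ 2) * (r₀ - σ)) ^ 2 := by ring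
    rw [e2]
    calc 4 * π * (((h σ) ^ 2 - (r₀ - σ) ^ 2) * (r₀ - σ)) ^ 2
        ≤ 4 * π * (2 * r₀ ^ 2 * m) ^ 2 := by
          apply mul_le_mul_of_nonneg_left hX2 (by positivity)
      _ = 16 * π * r₀ ^ 4 * m ^ 2 := by ring
  have B2 : ∀ σ ∈ Set.Icc (0:ℝ) D,
      (2 * h σ * deriv h σ + 2 * (r₀ - σ)) ^ 2 * (4 * π * (r₀ - σ) ^ 2)
        ≤ 16 * π * r₀ ^ 2 * m ^ 2 := by
    intro σ hσ
    obtain ⟨hσ0, hσD⟩ := hσ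
    have hσr : σ ≤ r₀ := le_trans hσD hDr
    have hu0 : 0 ≤ r₀ - σ := by linarith
    have hA0 : 0 ≤ h σ - (r₀ - σ) := by linarith [hlb σ hσ0]
    have hAu : (h σ - (r₀ - σ)) * (r₀ - σ) ≤ σ * m := hA2 σ hσ0 hσr
    have hhp : h σ * (1 + deriv h σ) ≤ m := hd2 σ hσ0 hσr
    have h1 : 0 ≤ 1 + deriv h σ := by linarith [(hd σ hσ0).1]
    have h3 : (0:ℝ) ≤ h σ := le_trans (by linarith) (hlb σ hσ0)
    have hid : (2 * h σ * deriv h σ + 2 * (r₀ - σ)) * (r₀ - σ)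
        = 2 * (h σ * (1 + deriv h σ) * (r₀ - σ)) - 2 * ((h σ - (r₀ - σ)) * (r₀ - σ)) := by ring
    have hp0 : 0 ≤ h σ * (1 + deriv h σ) := mul_nonneg h3 h1
    have hpu : h σ * (1 + deriv h σ) * (r₀ - σ) ≤ m * r₀ := by
      calc h σ * (1 + deriv h σ) * (r₀ - σ) ≤ m * (r₀ - σ) :=
            mul_le_mul_of_nonneg_right hhp hu0
        _ ≤ m * r₀ := by nlinarith
    have hY1 : (2 * h σ * deriv h σ + 2 * (r₀ - σ)) * (r₀ - σ) ≤ 2 * r₀ * m := by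
      rw [hid]
      have := mul_nonneg hA0 hu0
      nlinarith
    have hY2 : -(2 * r₀ * m) ≤ (2 * h σ * deriv h σ + 2 * (r₀ - σ)) * (r₀ - σ) := by
      rw [hid]
      have := mul_nonneg hp0 hu0
      nlinarith
    have hY : ((2 * h σ * deriv h σ + 2 * (r₀ - σ)) * (r₀ - σ)) ^ 2 ≤ (2 * r₀ * m) ^ 2 :=
      sq_le_sq' hY2 hY1
    have e2 : (2 * h σ * deriv h σ + 2 * (r₀ - σ)) ^ 2 * (4 * π * (r₀ - σ) ^ 2)
        = 4 * π * ((2 * h σ * deriv h σ + 2 * (r₀ - σ)) * (r₀ - σ)) ^ 2 := by ring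
    rw [e2]
    calc 4 * π * ((2 * h σ * deriv h σ + 2 * (r₀ - σ)) * (r₀ - σ)) ^ 2
        ≤ 4 * π * (2 * r₀ * m) ^ 2 := by
          apply mul_le_mul_of_nonneg_left hY (by positivity)
      _ = 16 * π * r₀ ^ 2 * m ^ 2 := by ring
  -- integrability
  have hmeas_h : AEMeasurable h (MeasureTheory.volume.restrict (Set.Ioc 0 D)) :=
    (hcont.mono (fun x hx => le_of_lt hx.1)).aemeasurable measurableSet_Ioc
  have hmeas_d : AEMeasurable (deriv h) (MeasureTheory.volume.restrict (Set.Ioc 0 D)) :=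
    (measurable_deriv h).aemeasurable
  have hmeas_u : AEMeasurable (fun σ : ℝ => r₀ - σ) (MeasureTheory.volume.restrict (Set.Ioc 0 D)) :=
    (measurable_const.sub measurable_id).aemeasurable
  have hmeas1 : AEMeasurable (fun σ : ℝ => ((h σ) ^ 2 - (r₀ - σ) ^ 2) ^ 2 * (4 * π * (r₀ - σ) ^ 2))
      (MeasureTheory.volume.restrict (Set.Ioc 0 D)) :=
    (((hmeas_h.pow_const 2).sub (hmeas_u.pow_const 2)).pow_const 2).mul
      (aemeasurable_const.mul (hmeas_u.pow_const 2))
  have hmeas2 : AEMeasurable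
      (fun σ : ℝ => (2 * h σ * deriv h σ + 2 * (r₀ - σ)) ^ 2 * (4 * π * (r₀ - σ) ^ 2))
      (MeasureTheory.volume.restrict (Set.Ioc 0 D)) :=
    ((((aemeasurable_const.mul hmeas_h).mul hmeas_d).add
      (aemeasurable_const.mul hmeas_u)).pow_const 2).mul
      (aemeasurable_const.mul (hmeas_u.pow_const 2))
  have hIoc : MeasureTheory.volume (Set.Ioc (0:ℝ) D) < ⊤ := measure_Ioc_lt_top
  have hint1 : IntervalIntegrable
      (fun σ : ℝ => ((h σ) ^ 2 - (r₀ - σ) ^ 2) ^ 2 * (4 * π * (r₀ - σ) ^ 2))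
      MeasureTheory.volume 0 D := by
    rw [intervalIntegrable_iff_integrableOn_Ioc_of_le hD.le]
    apply MeasureTheory.Integrable.mono'
      (MeasureTheory.integrableOn_const (C := 16 * π * r₀ ^ 4 * m ^ 2) hIoc.ne) hmeas1.aestronglyMeasurable
    filter_upwards [MeasureTheory.ae_restrict_mem measurableSet_Ioc] with x hx
    rw [Real.norm_eq_abs, abs_of_nonneg (by positivity)]
    exact B1 x ⟨hx.1.le, hx.2⟩
  have hint2 : IntervalIntegrable
      (fun σ : ℝ => (2 * h σ * deriv h σ + 2 * (r₀ - σ)) ^ 2 * (4 * π * (r₀ - σ) ^ 2))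
      MeasureTheory.volume 0 D := by
    rw [intervalIntegrable_iff_integrableOn_Ioc_of_le hD.le]
    apply MeasureTheory.Integrable.mono'
      (MeasureTheory.integrableOn_const (C := 16 * π * r₀ ^ 2 * m ^ 2) hIoc.ne) hmeas2.aestronglyMeasurable
    filter_upwards [MeasureTheory.ae_restrict_mem measurableSet_Ioc] with x hx
    rw [Real.norm_eq_abs, abs_of_nonneg (by positivity)]
    exact B2 x ⟨hx.1.le, hx.2⟩
  -- integral bounds
  have hI1 : (∫ σ in (0:ℝ)..D, ((h σ) ^ 2 - (r₀ - σ) ^ 2) ^ 2 * (4 * π * (r₀ - σ) ^ 2))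
      ≤ 16 * π * r₀ ^ 4 * m ^ 2 * D := by
    have := intervalIntegral.integral_mono_on hD.le hint1 intervalIntegrable_const B1
    rw [intervalIntegral.integral_const, smul_eq_mul, sub_zero] at this
    linarith
  have hI2 : (∫ σ in (0:ℝ)..D, (2 * h σ * deriv h σ + 2 * (r₀ - σ)) ^ 2 * (4 * π * (r₀ - σ) ^ 2))
      ≤ 16 * π * r₀ ^ 2 * m ^ 2 * D := by
    have := intervalIntegral.integral_mono_on hD.le hint2 intervalIntegrable_const B2
    rw [intervalIntegral.integral_const, smul_eq_mul, sub_zero] at this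
    linarith
  -- final arithmetic
  have hm2 : m ^ 2 ≤ 2 * δ ^ ((2:ℝ)/3) * r₀ ^ ((4:ℝ)/3) := by
    have e : m ^ 2 = m ^ ((2:ℝ)/3) * m ^ ((4:ℝ)/3) := by
      rw [← Real.rpow_natCast m 2, show ((2:ℕ):ℝ) = (2:ℝ)/3 + (4:ℝ)/3 by norm_num,
        Real.rpow_add' hm0 (by norm_num)]
    rw [e]
    have h1 : m ^ ((2:ℝ)/3) ≤ (2*δ) ^ ((2:ℝ)/3) := Real.rpow_le_rpow hm0 hmδ (by norm_num)
    have h2 : m ^ ((4:ℝ)/3) ≤ r₀ ^ ((4:ℝ)/3) := Real.rpow_le_rpow hm0 hmr (by norm_num)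
    have h3 : (2*δ) ^ ((2:ℝ)/3) ≤ 2 * δ ^ ((2:ℝ)/3) := by
      rw [Real.mul_rpow (by norm_num) hδ]
      have h4 : (2:ℝ) ^ ((2:ℝ)/3) ≤ 2 := by
        calc (2:ℝ) ^ ((2:ℝ)/3) ≤ (2:ℝ) ^ (1:ℝ) :=
              Real.rpow_le_rpow_of_exponent_le one_le_two (by norm_num)
          _ = 2 := Real.rpow_one 2
      exact mul_le_mul_of_nonneg_right h4 (Real.rpow_nonneg hδ _)
    calc m ^ ((2:ℝ)/3) * m ^ ((4:ℝ)/3) ≤ (2*δ) ^ ((2:ℝ)/3) * r₀ ^ ((4:ℝ)/3) :=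
          mul_le_mul h1 h2 (Real.rpow_nonneg hm0 _) (Real.rpow_nonneg (by positivity) _)
      _ ≤ 2 * δ ^ ((2:ℝ)/3) * r₀ ^ ((4:ℝ)/3) :=
          mul_le_mul_of_nonneg_right h3 (Real.rpow_nonneg hr.le _)
  have hDsplit : D = D ^ ((2:ℝ)/3) * D ^ ((1:ℝ)/3) := by
    rw [← Real.rpow_add' hD.le (by norm_num)]
    norm_num
  have hD23 : D ^ ((2:ℝ)/3) ≤ r₀ ^ ((2:ℝ)/3) := Real.rpow_le_rpow hD.le hDr (by norm_num)
  have hr43 : r₀ ^ ((4:ℝ)/3) * r₀ ^ ((2:ℝ)/3) = r₀ ^ 2 := by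
    rw [← Real.rpow_add hr, show (4:ℝ)/3 + (2:ℝ)/3 = ((2:ℕ):ℝ) by norm_num, Real.rpow_natCast]
  -- m^2 * D ≤ 2 * δ^(2/3) * r₀^2 * D^(1/3)
  have hkey : m ^ 2 * D ≤ 2 * δ ^ ((2:ℝ)/3) * r₀ ^ 2 * D ^ ((1:ℝ)/3) := by
    have hD13 : 0 ≤ D ^ ((1:ℝ)/3) := Real.rpow_nonneg hD.le _
    have hδ23 : 0 ≤ δ ^ ((2:ℝ)/3) := Real.rpow_nonneg hδ _
    calc m ^ 2 * D = m ^ 2 * (D ^ ((2:ℝ)/3) * D ^ ((1:ℝ)/3)) := by rw [← hDsplit]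
      _ ≤ (2 * δ ^ ((2:ℝ)/3) * r₀ ^ ((4:ℝ)/3)) * (r₀ ^ ((2:ℝ)/3) * D ^ ((1:ℝ)/3)) := by
          apply mul_le_mul hm2 (mul_le_mul_of_nonneg_right hD23 hD13)
            (mul_nonneg (Real.rpow_nonneg hD.le _) hD13) (by positivity)
      _ = 2 * δ ^ ((2:ℝ)/3) * (r₀ ^ ((4:ℝ)/3) * r₀ ^ ((2:ℝ)/3)) * D ^ ((1:ℝ)/3) := by ring
      _ = 2 * δ ^ ((2:ℝ)/3) * r₀ ^ 2 * D ^ ((1:ℝ)/3) := by rw [hr43]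
  have hRHS : (16 * Real.sqrt π * r₀ ^ 2 * δ ^ ((1:ℝ)/3) * D ^ ((1:ℝ)/6)) ^ 2
      = 256 * π * r₀ ^ 4 * δ ^ ((2:ℝ)/3) * D ^ ((1:ℝ)/3) := by
    have hδe : (δ ^ ((1:ℝ)/3)) ^ 2 = δ ^ ((2:ℝ)/3) := by
      rw [← Real.rpow_natCast (δ ^ ((1:ℝ)/3)) 2, ← Real.rpow_mul hδ]
      norm_num
    have hDe : (D ^ ((1:ℝ)/6)) ^ 2 = D ^ ((1:ℝ)/3) := by
      rw [← Real.rpow_natCast (D ^ ((1:ℝ)/6)) 2, ← Real.rpow_mul hD.le]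
      norm_num
    have hπ : Real.sqrt π ^ 2 = π := Real.sq_sqrt pi_nonneg
    rw [mul_pow, mul_pow, mul_pow, mul_pow, hπ, hδe, hDe]
    ring
  rw [hRHS]
  have hδ23 : 0 ≤ δ ^ ((2:ℝ)/3) := Real.rpow_nonneg hδ _
  have hD13 : 0 ≤ D ^ ((1:ℝ)/3) := Real.rpow_nonneg hD.le _
  have hfin : 16 * π * r₀ ^ 4 * m ^ 2 * D + 16 * π * r₀ ^ 2 * m ^ 2 * D
      ≤ (1 + r₀ ^ 2) * (256 * π * r₀ ^ 4 * δ ^ ((2:ℝ)/3) * D ^ ((1:ℝ)/3)) := by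
    have e : 16 * π * r₀ ^ 4 * m ^ 2 * D + 16 * π * r₀ ^ 2 * m ^ 2 * D
        = (1 + r₀ ^ 2) * (16 * π * r₀ ^ 2) * (m ^ 2 * D) := by ring
    rw [e]
    have h5 : (1 + r₀ ^ 2) * (16 * π * r₀ ^ 2) * (m ^ 2 * D)
        ≤ (1 + r₀ ^ 2) * (16 * π * r₀ ^ 2) * (2 * δ ^ ((2:ℝ)/3) * r₀ ^ 2 * D ^ ((1:ℝ)/3)) :=
      mul_le_mul_of_nonneg_left hkey (by positivity)
    have e2 : (1 + r₀ ^ 2) * (16 * π * r₀ ^ 2) * (2 * δ ^ ((2:ℝ)/3) * r₀ ^ 2 * D ^ ((1:ℝ)/3))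
        = (1 + r₀ ^ 2) * (32 * π * r₀ ^ 4 * δ ^ ((2:ℝ)/3) * D ^ ((1:ℝ)/3)) := by ring
    have h6 : (1 + r₀ ^ 2) * (32 * π * r₀ ^ 4 * δ ^ ((2:ℝ)/3) * D ^ ((1:ℝ)/3))
        ≤ (1 + r₀ ^ 2) * (256 * π * r₀ ^ 4 * δ ^ ((2:ℝ)/3) * D ^ ((1:ℝ)/3)) := by
      apply mul_le_mul_of_nonneg_left _ (by positivity)
      nlinarith [pi_pos, mul_nonneg (mul_nonneg hδ23 hD13) (pow_nonneg hr.le 4),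
        mul_nonneg (mul_nonneg hδ23 hD13) pi_pos.le]
    linarith [h5, e2.le, e2.ge, h6]
  linarith [hI1, hI2, hfin]
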